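/- arXiv:2406.17264 — 2 statements merged into one kernel-verified Lean document; each statement's English description precedes it below -/
import Mathlib

section
/- Let α > 0 and Φ ≥ 0, and let P(x_h) = (2(α+2)Φ)/((α+4)π) · (1 − (α/(α+2))(x₁²+x₂²)) for x_h = (x₁,x₂) ∈ ℝ². Then the squared L² norm of its gradient over the unit disk is exactly ∫_D |∇P(x_h)|² dx_h = 8α²Φ²/((α+4)²π); in particular ‖∇P‖_{L²(D)} ≤ (2√2/√π) · Φ · α/(1+α). -/
open MeasureTheory

/-- Partial derivative `∂_{x_i} f` of a scalar function on `ℝ²`. -/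
noncomputable def pd2 (i : Fin 2) (f : (Fin 2 → ℝ) → ℝ) (x : Fin 2 → ℝ) : ℝ :=
  fderiv ℝ f x (Pi.single i 1)

/-- The open unit disk in the plane. -/
def unitDisk : Set (Fin 2 → ℝ) := {xh | xh 0 ^ 2 + xh 1 ^ 2 < 1}

/-- The profile of the generalized Hagen–Poiseuille flow on the unit disk. -/
noncomputable def Pprof (α Φ : ℝ) (xh : Fin 2 → ℝ) : ℝ :=
  (2 * (α + 2) * Φ) / ((α + 4) * Real.pi) *
    (1 - α / (α + 2) * (xh 0 ^ 2 + xh 1 ^ 2))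

-- key integral in ℝ × ℝ
lemma disk_moment :
    (∫ p : ℝ × ℝ, Set.indicator {q : ℝ × ℝ | q.1 ^ 2 + q.2 ^ 2 < 1}
        (fun q => q.1 ^ 2 + q.2 ^ 2) p) = Real.pi / 2 := by
  rw [← integral_comp_polarCoord_symm]
  have h1 : (∫ p in polarCoord.target,
      p.1 • Set.indicator {q : ℝ × ℝ | q.1 ^ 2 + q.2 ^ 2 < 1}
        (fun q => q.1 ^ 2 + q.2 ^ 2) (polarCoord.symm p))
      = ∫ p in (Set.Ioi (0:ℝ)) ×ˢ (Set.Ioo (-Real.pi) Real.pi),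
          (Set.indicator (Set.Ioo (0:ℝ) 1) (fun r => r ^ 3) p.1) * (1 : ℝ) := by
    apply setIntegral_congr_fun (polarCoord.open_target.measurableSet)
    rintro ⟨r, θ⟩ ⟨hr, hθ⟩
    simp only [polarCoord, OpenPartialHomeomorph.mk_coe_symm, PartialEquiv.coe_symm_mk]
    have hrr : (r * Real.cos θ) ^ 2 + (r * Real.sin θ) ^ 2 = r ^ 2 := by
      have := Real.sin_sq_add_cos_sq θ; nlinarith [this]
    have hr0 : (0:ℝ) < r := hr
    by_cases h : r < 1
    · rw [Set.indicator_of_mem, Set.indicator_of_mem]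
      · simp only [smul_eq_mul, hrr]; ring
      · exact ⟨hr0, h⟩
      · show (r * Real.cos θ) ^ 2 + (r * Real.sin θ) ^ 2 < 1
        rw [hrr]; nlinarith
    · rw [Set.indicator_of_notMem, Set.indicator_of_notMem]
      · simp
      · intro hm; exact h hm.2
      · show ¬ ((r * Real.cos θ) ^ 2 + (r * Real.sin θ) ^ 2 < 1)
        rw [hrr]; push_neg at h ⊢; nlinarith
  have h2 : (∫ r in Set.Ioi (0:ℝ), Set.indicator (Set.Ioo (0:ℝ) 1) (fun r => r ^ 3) r)
      = 1 / 4 := by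
    rw [setIntegral_indicator measurableSet_Ioo,
        show Set.Ioi (0:ℝ) ∩ Set.Ioo 0 1 = Set.Ioo 0 1 by
          rw [Set.inter_eq_right]; exact fun x hx => hx.1,
        ← integral_Ioc_eq_integral_Ioo,
        ← intervalIntegral.integral_of_le (by norm_num : (0:ℝ) ≤ 1)]
    rw [integral_pow]
    norm_num
  have h3 : (∫ _ in Set.Ioo (-Real.pi) Real.pi, (1:ℝ)) = 2 * Real.pi := by
    simp [Real.pi_pos.le, two_mul]
  calc (∫ p in polarCoord.target,
      p.1 • Set.indicator {q : ℝ × ℝ | q.1 ^ 2 + q.2 ^ 2 < 1}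
        (fun q => q.1 ^ 2 + q.2 ^ 2) (polarCoord.symm p))
      = ∫ p in (Set.Ioi (0:ℝ)) ×ˢ (Set.Ioo (-Real.pi) Real.pi),
          (fun r : ℝ => Set.indicator (Set.Ioo (0:ℝ) 1) (fun r => r ^ 3) r) p.1
            * (fun _ : ℝ => (1:ℝ)) p.2 ∂((volume : Measure ℝ).prod volume) := h1
    _ = (∫ r in Set.Ioi (0:ℝ), Set.indicator (Set.Ioo (0:ℝ) 1) (fun r => r ^ 3) r)
          * (∫ _ in Set.Ioo (-Real.pi) Real.pi, (1:ℝ)) :=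
        setIntegral_prod_mul (fun r : ℝ => Set.indicator (Set.Ioo (0:ℝ) 1) (fun r => r ^ 3) r)
          (fun _ : ℝ => (1:ℝ)) (Set.Ioi (0:ℝ)) (Set.Ioo (-Real.pi) Real.pi)
    _ = Real.pi / 2 := by rw [h2, h3]; ring

lemma disk_moment' :
    (∫ xh in unitDisk, (xh 0 ^ 2 + xh 1 ^ 2)) = Real.pi / 2 := by
  have hemb : MeasurableEmbedding (MeasurableEquiv.finTwoArrow (α := ℝ)).symm :=
    (MeasurableEquiv.finTwoArrow (α := ℝ)).symm.measurableEmbedding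
  have hmp := (volume_preserving_finTwoArrow ℝ).symm
  have key := hmp.setIntegral_preimage_emb hemb
    (fun xh : Fin 2 → ℝ => xh 0 ^ 2 + xh 1 ^ 2) unitDisk
  have hpre : (MeasurableEquiv.finTwoArrow (α := ℝ)).symm ⁻¹' unitDisk
      = {q : ℝ × ℝ | q.1 ^ 2 + q.2 ^ 2 < 1} := by
    ext p
    simp [unitDisk, MeasurableEquiv.finTwoArrow]
  rw [← key, hpre, ← integral_indicator (by
      have : IsOpen {q : ℝ × ℝ | q.1 ^ 2 + q.2 ^ 2 < 1} := by
        have : Continuous fun q : ℝ × ℝ => q.1 ^ 2 + q.2 ^ 2 := by continuity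
        exact isOpen_lt this continuous_const
      exact this.measurableSet)]
  have hfun : (fun x : ℝ × ℝ => (MeasurableEquiv.finTwoArrow (α := ℝ)).symm x 0 ^ 2
      + (MeasurableEquiv.finTwoArrow (α := ℝ)).symm x 1 ^ 2)
      = fun q : ℝ × ℝ => q.1 ^ 2 + q.2 ^ 2 := by
    funext q; simp [MeasurableEquiv.finTwoArrow]
  rw [hfun, ← disk_moment]

lemma pd2_Pprof (α Φ : ℝ) (i : Fin 2) (x : Fin 2 → ℝ) :
    pd2 i (Pprof α Φ) x
      = -(2 * ((2 * (α + 2) * Φ) / ((α + 4) * Real.pi)) * (α / (α + 2))) * x i := by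
  set C : ℝ := (2 * (α + 2) * Φ) / ((α + 4) * Real.pi) with hC
  set K : ℝ := α / (α + 2) with hK
  have hp0 : HasFDerivAt (fun x : Fin 2 → ℝ => x 0)
      (ContinuousLinearMap.proj (R := ℝ) (φ := fun _ : Fin 2 => ℝ) 0) x :=
    hasFDerivAt_apply 0 x
  have hp1 : HasFDerivAt (fun x : Fin 2 → ℝ => x 1)
      (ContinuousLinearMap.proj (R := ℝ) (φ := fun _ : Fin 2 => ℝ) 1) x :=
    hasFDerivAt_apply 1 x
  set L : (Fin 2 → ℝ) →L[ℝ] ℝ :=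
    (x 0 • ContinuousLinearMap.proj (R := ℝ) (φ := fun _ : Fin 2 => ℝ) 0
      + x 0 • ContinuousLinearMap.proj (R := ℝ) (φ := fun _ : Fin 2 => ℝ) 0)
    + (x 1 • ContinuousLinearMap.proj (R := ℝ) (φ := fun _ : Fin 2 => ℝ) 1
      + x 1 • ContinuousLinearMap.proj (R := ℝ) (φ := fun _ : Fin 2 => ℝ) 1) with hL
  have hsq0 : HasFDerivAt (fun x : Fin 2 → ℝ => x 0 ^ 2)
      (x 0 • ContinuousLinearMap.proj (R := ℝ) (φ := fun _ : Fin 2 => ℝ) 0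
        + x 0 • ContinuousLinearMap.proj (R := ℝ) (φ := fun _ : Fin 2 => ℝ) 0) x := by
    have := hp0.mul hp0
    simpa [pow_two, Pi.mul_def] using this
  have hsq1 : HasFDerivAt (fun x : Fin 2 → ℝ => x 1 ^ 2)
      (x 1 • ContinuousLinearMap.proj (R := ℝ) (φ := fun _ : Fin 2 => ℝ) 1
        + x 1 • ContinuousLinearMap.proj (R := ℝ) (φ := fun _ : Fin 2 => ℝ) 1) x := by
    have := hp1.mul hp1
    simpa [pow_two, Pi.mul_def] using this
  have hsq : HasFDerivAt (fun x : Fin 2 → ℝ => x 0 ^ 2 + x 1 ^ 2) L x := hsq0.add hsq1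
  have hP : HasFDerivAt (Pprof α Φ) (C • ((0 : (Fin 2 → ℝ) →L[ℝ] ℝ) - K • L)) x := by
    have h1 : HasFDerivAt (fun x : Fin 2 → ℝ => 1 - K * (x 0 ^ 2 + x 1 ^ 2))
        ((0 : (Fin 2 → ℝ) →L[ℝ] ℝ) - K • L) x :=
      (hasFDerivAt_const (1:ℝ) x).sub (hsq.const_mul K)
    exact h1.const_mul C
  rw [pd2, hP.fderiv]
  fin_cases i <;>
    simp [hL, ContinuousLinearMap.proj_apply, Pi.single, Function.update] <;> ring

/-- Exact value of the squared `L²` norm of the gradient of the Hagen–Poiseuille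
profile on the unit disk, and the resulting bound `‖∇P‖_{L²(D)} ≤ (2√2/√π)·Φ·α/(1+α)`. -/
theorem stmt7 (α Φ : ℝ) (hα : 0 < α) (hΦ : 0 ≤ Φ) :
    (∫ xh in unitDisk,
        ((pd2 0 (Pprof α Φ) xh) ^ 2 + (pd2 1 (Pprof α Φ) xh) ^ 2))
      = 8 * α ^ 2 * Φ ^ 2 / ((α + 4) ^ 2 * Real.pi) ∧
    Real.sqrt (∫ xh in unitDisk,
        ((pd2 0 (Pprof α Φ) xh) ^ 2 + (pd2 1 (Pprof α Φ) xh) ^ 2))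
      ≤ (2 * Real.sqrt 2 / Real.sqrt Real.pi) * Φ * (α / (1 + α)) := by
  have hπ := Real.pi_pos
  set A : ℝ := -(2 * ((2 * (α + 2) * Φ) / ((α + 4) * Real.pi)) * (α / (α + 2))) with hA
  have hval : (∫ xh in unitDisk,
        ((pd2 0 (Pprof α Φ) xh) ^ 2 + (pd2 1 (Pprof α Φ) xh) ^ 2))
      = 8 * α ^ 2 * Φ ^ 2 / ((α + 4) ^ 2 * Real.pi) := by
    have hfun : (fun xh : Fin 2 → ℝ =>
        (pd2 0 (Pprof α Φ) xh) ^ 2 + (pd2 1 (Pprof α Φ) xh) ^ 2)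
        = fun xh => A ^ 2 * (xh 0 ^ 2 + xh 1 ^ 2) := by
      funext xh
      rw [pd2_Pprof, pd2_Pprof, ← hA]
      ring
    rw [hfun, integral_const_mul, disk_moment']
    have hA2 : A ^ 2 = 16 * α ^ 2 * Φ ^ 2 / ((α + 4) ^ 2 * Real.pi ^ 2) := by
      rw [hA]
      field_simp
      ring
    rw [hA2]
    field_simp
    ring
  refine ⟨hval, ?_⟩
  rw [hval]
  have h1α : (0:ℝ) < 1 + α := by linarith
  have step1 : 8 * α ^ 2 * Φ ^ 2 / ((α + 4) ^ 2 * Real.pi)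
      ≤ 8 * α ^ 2 * Φ ^ 2 / ((1 + α) ^ 2 * Real.pi) := by
    apply div_le_div_of_nonneg_left (by positivity) (by positivity)
    nlinarith
  have step2 : (8 * α ^ 2 * Φ ^ 2 / ((1 + α) ^ 2 * Real.pi))
      = ((2 * Real.sqrt 2 / Real.sqrt Real.pi) * Φ * (α / (1 + α))) ^ 2 := by
    have h2 : Real.sqrt 2 ^ 2 = 2 := Real.sq_sqrt (by norm_num)
    have hπ2 : Real.sqrt Real.pi ^ 2 = Real.pi := Real.sq_sqrt hπ.le
    have hπs : Real.sqrt Real.pi ≠ 0 := by positivity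
    have key : (2 * Real.sqrt 2 / Real.sqrt Real.pi) ^ 2 = 8 / Real.pi := by
      rw [div_pow, mul_pow, h2, hπ2]; norm_num
    rw [mul_pow, mul_pow, key, div_pow]
    field_simp
  calc Real.sqrt (8 * α ^ 2 * Φ ^ 2 / ((α + 4) ^ 2 * Real.pi))
      ≤ Real.sqrt (8 * α ^ 2 * Φ ^ 2 / ((1 + α) ^ 2 * Real.pi)) :=
        Real.sqrt_le_sqrt step1
    _ = (2 * Real.sqrt 2 / Real.sqrt Real.pi) * Φ * (α / (1 + α)) := by
        rw [step2, Real.sqrt_sq (by positivity)]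
end

section
/- Let C ∈ ℝ and Φ ≥ 0, and let u_h(x) = (−Cx₂, Cx₁, Φ/π) be the helical flow. Then: (i) the stress tensor vanishes identically, S u_h(x) = 0 for all x ∈ ℝ³, so in particular 2(S u_h(x) n)_tan = 0 for every x with x₁² + x₂² = 1, where n = (x₁, x₂, 0); (ii) u_h(x)·n = 0 whenever x₁² + x₂² = 1; and (iii) ∫_D (u_h)₃(x₁, x₂, z) dx₁dx₂ = Φ for every z ∈ ℝ. Hence u_h solves the generalized Leray problem in the unit cylinder with the total Navier-slip boundary condition (friction ratio α = 0) and flux Φ for every C ∈ ℝ, so uniqueness fails for α = 0 even when Φ = 0. -/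
open MeasureTheory

/-- Partial derivative `∂_{x_i} f` of a scalar function on `ℝ³`. -/
noncomputable def pd (i : Fin 3) (f : (Fin 3 → ℝ) → ℝ) (x : Fin 3 → ℝ) : ℝ :=
  fderiv ℝ f x (Pi.single i 1)

/-- The helical flow `u_h(x) = (-Cx₂, Cx₁, Φ/π)`. -/
noncomputable def uh (C Φ : ℝ) (x : Fin 3 → ℝ) : Fin 3 → ℝ :=
  ![-C * x 1, C * x 0, Φ / Real.pi]

lemma pd_const (c : ℝ) (j : Fin 3) (x : Fin 3 → ℝ) : pd j (fun _ => c) x = 0 := by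
  simp [pd]

lemma pd_cmul (c : ℝ) (k j : Fin 3) (x : Fin 3 → ℝ) :
    pd j (fun y => c * y k) x = if j = k then c else 0 := by
  have h1 : fderiv ℝ (fun y : Fin 3 → ℝ => y k) x
      = (ContinuousLinearMap.proj k : (Fin 3 → ℝ) →L[ℝ] ℝ) := by
    exact (ContinuousLinearMap.proj k : (Fin 3 → ℝ) →L[ℝ] ℝ).fderiv
  have hd : DifferentiableAt ℝ (fun y : Fin 3 → ℝ => y k) x :=
    (ContinuousLinearMap.proj k : (Fin 3 → ℝ) →L[ℝ] ℝ).differentiableAt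
  unfold pd
  rw [fderiv_const_mul hd, h1]
  simp [Pi.single_apply, eq_comm]

lemma pd_neg_cmul (c : ℝ) (k j : Fin 3) (x : Fin 3 → ℝ) :
    pd j (fun y => -(c * y k)) x = if j = k then -c else 0 := by
  simpa [neg_mul] using pd_cmul (-c) k j x

lemma volume_unitDisk : volume unitDisk = ENNReal.ofReal Real.pi := by
  have hmeas : MeasurableSet unitDisk := by
    have : Measurable fun xh : Fin 2 → ℝ => xh 0 ^ 2 + xh 1 ^ 2 := by fun_prop
    exact measurableSet_lt this measurable_const
  have h1 : (MeasurableEquiv.toLp 2 (Fin 2 → ℝ)).symm ⁻¹' unitDisk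
      = Metric.ball (0 : EuclideanSpace ℝ (Fin 2)) 1 := by
    ext x
    simp [unitDisk, EuclideanSpace.ball_zero_eq _ zero_le_one, Fin.sum_univ_two,
      MeasurableEquiv.toLp, add_comm]
    exact Iff.rfl
  rw [← (EuclideanSpace.volume_preserving_symm_measurableEquiv_toLp (Fin 2)).measure_preimage
      hmeas.nullMeasurableSet, h1, EuclideanSpace.volume_ball]
  have h2 : ((Fintype.card (Fin 2) : ℝ) / 2 + 1) = 2 := by
    simp; norm_num
  rw [h2, Real.Gamma_two]
  simp [Fintype.card_fin, Real.sq_sqrt Real.pi_pos.le]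

/-- The helical flow solves the generalized Leray problem in the unit cylinder with
the total Navier-slip condition (`α = 0`) and flux `Φ`:
(i) its stress tensor `S u_h = (∇u_h + (∇u_h)ᵀ)/2` vanishes identically, so in
particular `2 (S u_h n)_tan = 0` on the lateral boundary, where `n = (x₁,x₂,0)`;
(ii) `u_h · n = 0` on the lateral boundary; (iii) its flux through every
cross-section equals `Φ`. -/
theorem stmt11 (C Φ : ℝ) (hΦ : 0 ≤ Φ) :
    (∀ x : Fin 3 → ℝ, ∀ i j : Fin 3,
      (pd j (fun y => uh C Φ y i) x + pd i (fun y => uh C Φ y j) x) / 2 = 0) ∧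
    (∀ x : Fin 3 → ℝ, x 0 ^ 2 + x 1 ^ 2 = 1 →
      let n : Fin 3 → ℝ := ![x 0, x 1, 0]
      let S : Fin 3 → Fin 3 → ℝ := fun i j =>
        (pd j (fun y => uh C Φ y i) x + pd i (fun y => uh C Φ y j) x) / 2
      let Sn : Fin 3 → ℝ := fun i => ∑ j : Fin 3, S i j * n j
      ∀ i : Fin 3, 2 * (Sn i - (∑ k : Fin 3, Sn k * n k) * n i) = 0) ∧
    (∀ x : Fin 3 → ℝ, x 0 ^ 2 + x 1 ^ 2 = 1 →
      uh C Φ x 0 * x 0 + uh C Φ x 1 * x 1 = 0) ∧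
    (∀ z : ℝ, (∫ xh in unitDisk, uh C Φ ![xh 0, xh 1, z] 2) = Φ) := by
  have part1 : ∀ x : Fin 3 → ℝ, ∀ i j : Fin 3,
      (pd j (fun y => uh C Φ y i) x + pd i (fun y => uh C Φ y j) x) / 2 = 0 := by
    intro x i j
    fin_cases i <;> fin_cases j <;>
      simp [uh, pd_const, pd_cmul, pd_neg_cmul]
  refine ⟨part1, ?_, ?_, ?_⟩
  · intro x hx i
    simp [part1 x]
  · intro x hx
    simp only [uh, Matrix.cons_val_zero, Matrix.cons_val_one, Matrix.head_cons]
    ring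
  · intro z
    have : ∀ xh : Fin 2 → ℝ, uh C Φ ![xh 0, xh 1, z] 2 = Φ / Real.pi := by
      intro xh; simp [uh]
    simp_rw [this]
    rw [setIntegral_const, measureReal_def, volume_unitDisk, ENNReal.toReal_ofReal Real.pi_pos.le,
      smul_eq_mul, mul_div_cancel₀ _ Real.pi_ne_zero]
end
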